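/- Let α₁, ..., α_r ∈ (0,1] be algebraically independent over ℚ, and let h > 0 with exp(2π/h) rational; let P_h be the primes not dividing numerator or denominator of exp(2π/h). Then for integers (k_p)_{p∈P_h} and (l_{mj})_{m∈ℕ₀, 1≤j≤r}, all but finitely many zero and not all zero, exp(-ih(Σ_p k_p log p + Σ_{j=1}^r Σ_m l_{mj} log(m+α_j))) ≠ 1. -/

import Mathlib

open Finset

private lemma padicValRat_zpow' (p : ℕ) [hp : Fact p.Prime] {q : ℚ} (hq : q ≠ 0) (n : ℤ) :
    padicValRat p (q ^ n) = n * padicValRat p q := by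
  obtain ⟨m, rfl | rfl⟩ := n.eq_nat_or_neg
  · rw [zpow_natCast, padicValRat.pow q]
  · rw [zpow_neg, zpow_natCast, padicValRat.inv, padicValRat.pow q]; ring

private lemma padicValRat_prod' (p : ℕ) [hp : Fact p.Prime] {ι : Type*} (s : Finset ι)
    (f : ι → ℚ) (hf : ∀ i ∈ s, f i ≠ 0) :
    padicValRat p (∏ i ∈ s, f i) = ∑ i ∈ s, padicValRat p (f i) := by
  classical
  induction s using Finset.induction with
  | empty => simp
  | insert _ _ hi ih =>
    rename_i a s
    rw [Finset.prod_insert hi, Finset.sum_insert hi,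
      padicValRat.mul (hf a (mem_insert_self a s))
        (Finset.prod_ne_zero_iff.mpr fun i hi' => hf i (mem_insert_of_mem hi')),
      ih fun i hi' => hf i (mem_insert_of_mem hi')]

private lemma pow_toNat_eq {x : ℝ} (hx : x ≠ 0) (n : ℤ) :
    x ^ n.toNat = x ^ n * x ^ (-n).toNat := by
  rcases le_or_gt 0 n with h | h
  · rw [Int.toNat_eq_zero.mpr (by omega : -n ≤ 0), pow_zero, mul_one, ← zpow_natCast,
      Int.toNat_of_nonneg h]
  · rw [Int.toNat_eq_zero.mpr h.le, pow_zero, ← zpow_natCast, Int.toNat_of_nonneg (by omega),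
      ← zpow_add₀ hx]
    simp

private lemma exp_int_mul_log {x : ℝ} (hx : 0 < x) (n : ℤ) :
    Real.exp ((n : ℝ) * Real.log x) = x ^ n := by
  rw [mul_comm, ← Real.rpow_def_of_pos hx, Real.rpow_intCast]

theorem stmt_11 (r : ℕ) (α : Fin r → ℝ) (hmem : ∀ j, 0 < α j ∧ α j ≤ 1)
    (hind : AlgebraicIndependent ℚ α)
    (h : ℝ) (hh : 0 < h) (q : ℚ) (hq : Real.exp (2 * Real.pi / h) = (q : ℝ))
    (k : ℕ → ℤ) (l : Fin r → ℕ → ℤ)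
    (hkfin : (Function.support k).Finite)
    (hlfin : ∀ j, (Function.support (l j)).Finite)
    (hksupp : ∀ p, k p ≠ 0 → Nat.Prime p ∧ ¬ (p : ℤ) ∣ q.num * (q.den : ℤ))
    (hnontriv : (∃ p, k p ≠ 0) ∨ (∃ j m, l j m ≠ 0)) :
    Complex.exp (-Complex.I * h *
      ((∑ᶠ p : ℕ, (k p : ℝ) * Real.log p)
        + ∑ j : Fin r, ∑ᶠ m : ℕ, (l j m : ℝ) * Real.log ((m : ℝ) + α j))) ≠ 1 := by
  classical
  have hq0 : (0:ℝ) < (q : ℝ) := hq ▸ Real.exp_pos _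
  have hq0' : (0:ℚ) < q := by exact_mod_cast hq0
  have hqne : q ≠ 0 := ne_of_gt hq0'
  have hlogq : Real.log (q : ℝ) = 2 * Real.pi / h := by rw [← hq, Real.log_exp]
  set S : Finset ℕ := hkfin.toFinset with hS
  set T : Fin r → Finset ℕ := fun j => (hlfin j).toFinset with hT
  set X : ℝ := (∑ᶠ p : ℕ, (k p : ℝ) * Real.log p)
      + ∑ j : Fin r, ∑ᶠ m : ℕ, (l j m : ℝ) * Real.log ((m : ℝ) + α j) with hXdef
  intro heq
  rw [Complex.exp_eq_one_iff] at heq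
  obtain ⟨n, hn⟩ := heq
  -- step 1 : real equation
  have hreal : h * X = (-n : ℝ) * (2 * Real.pi) := by
    rw [← Complex.ofReal_add, ← hXdef] at hn
    have h2 : ((h * X : ℝ) : ℂ) = (((-n : ℝ) * (2 * Real.pi) : ℝ) : ℂ) := by
      push_cast
      linear_combination Complex.I * hn + ((h:ℂ) * X + 2 * Real.pi * n) * Complex.I_sq
    exact_mod_cast h2
  have hX : X = ((-n : ℤ) : ℝ) * Real.log (q : ℝ) := by
    rw [hlogq]
    push_cast
    field_simp at hreal ⊢
    linarith [hreal]
  set n' : ℤ := -n with hn'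
  -- rewrite finsums as finite sums
  have h1 : (∑ᶠ p : ℕ, (k p : ℝ) * Real.log p) = ∑ p ∈ S, (k p : ℝ) * Real.log p := by
    apply finsum_eq_sum_of_support_subset
    intro p hp
    rw [hS, Set.Finite.coe_toFinset]
    intro hk0
    apply hp
    simp [hk0]
  have h2 : ∀ j, (∑ᶠ m : ℕ, (l j m : ℝ) * Real.log ((m : ℝ) + α j))
      = ∑ m ∈ T j, (l j m : ℝ) * Real.log ((m : ℝ) + α j) := by
    intro j
    apply finsum_eq_sum_of_support_subset
    intro m hm
    rw [hT, Set.Finite.coe_toFinset]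
    intro hl0
    apply hm
    simp [hl0]
  have hSprime : ∀ p ∈ S, Nat.Prime p := fun p hp =>
    (hksupp p (hkfin.mem_toFinset.mp hp)).1
  have hαpos : ∀ (j : Fin r) (m : ℕ), (0:ℝ) < (m : ℝ) + α j := fun j m =>
    add_pos_of_nonneg_of_pos (Nat.cast_nonneg m) (hmem j).1
  have hprod : (∏ p ∈ S, (p:ℝ) ^ (k p)) *
      ∏ j : Fin r, ∏ m ∈ T j, ((m:ℝ) + α j) ^ (l j m) = (q:ℝ) ^ n' := by
    have := congrArg Real.exp (hXdef.symm.trans hX)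
    rw [exp_int_mul_log hq0] at this
    rw [← this, h1, Real.exp_add, Real.exp_sum, Real.exp_sum]
    congr 1
    · exact Finset.prod_congr rfl fun p hp => (exp_int_mul_log
        (by exact_mod_cast (hSprime p hp).pos : (0:ℝ) < (p:ℝ)) (k p)).symm
    · refine Finset.prod_congr rfl fun j _ => ?_
      rw [h2 j, Real.exp_sum]
      exact Finset.prod_congr rfl fun m _ => (exp_int_mul_log (hαpos j m) (l j m)).symm
  have hSne : ∀ p ∈ S, ((p:ℝ)) ≠ 0 := fun p hp => by
    exact_mod_cast (hSprime p hp).pos.ne'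
  by_cases hl : ∀ j m, l j m = 0
  · -- all l vanish : prime factorization argument
    obtain ⟨p₀, hp₀⟩ := hnontriv.resolve_right (by push_neg; exact fun j m => hl j m)
    have hp₀p : Nat.Prime p₀ := (hksupp p₀ hp₀).1
    haveI : Fact p₀.Prime := ⟨hp₀p⟩
    have hprod' : (∏ p ∈ S, (p:ℝ) ^ (k p)) = (q:ℝ) ^ n' := by
      rw [← hprod]
      have : ∀ j : Fin r, ∏ m ∈ T j, ((m:ℝ) + α j) ^ (l j m) = 1 := fun j =>
        Finset.prod_eq_one fun m _ => by rw [hl j m, zpow_zero]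
      simp [this]
    have hQ : (∏ p ∈ S, (p:ℚ) ^ (k p)) = q ^ n' := by
      have : ((∏ p ∈ S, (p:ℚ) ^ (k p) : ℚ) : ℝ) = ((q ^ n' : ℚ) : ℝ) := by
        push_cast
        exact hprod'
      exact_mod_cast this
    have hval := congrArg (padicValRat p₀) hQ
    rw [padicValRat_prod' p₀ S _ (fun p hp => zpow_ne_zero _ (by
        exact_mod_cast (hSprime p hp).pos.ne')),
      padicValRat_zpow' p₀ hqne n'] at hval
    have hqval : padicValRat p₀ q = 0 := by
      rw [padicValRat_def]
      have hnd := (hksupp p₀ hp₀).2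
      rw [padicValInt.eq_zero_of_not_dvd (fun hd => hnd (hd.mul_right _)),
        padicValNat.eq_zero_of_not_dvd (fun hd => hnd (Dvd.dvd.mul_left (by exact_mod_cast hd) _))]
      simp
    have hsum : ∑ p ∈ S, padicValRat p₀ ((p:ℚ) ^ (k p)) = k p₀ := by
      rw [Finset.sum_eq_single p₀]
      · rw [padicValRat_zpow' p₀ (by exact_mod_cast hp₀p.pos.ne') (k p₀)]
        have : padicValRat p₀ ((p₀:ℚ)) = 1 := by
          exact_mod_cast padicValRat.self hp₀p.one_lt
        rw [this, mul_one]
      · intro p hp hne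
        rw [padicValRat_zpow' p₀ (by exact_mod_cast (hSprime p hp).pos.ne') (k p)]
        have : padicValRat p₀ ((p:ℚ)) = 0 := by
          have hnd : ¬ p₀ ∣ p := fun hd =>
            hne (((Nat.prime_dvd_prime_iff_eq hp₀p (hSprime p hp)).mp hd).symm)
          exact_mod_cast padicValNat.eq_zero_of_not_dvd hnd
        rw [this, mul_zero]
      · intro hns
        exact absurd (hkfin.mem_toFinset.mpr hp₀) hns
    rw [hsum, hqval, mul_zero] at hval
    exact hp₀ hval
  · push_neg at hl
    obtain ⟨j₀, m₀, hl0⟩ := hl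
    have hm₀T : m₀ ∈ T j₀ := (hlfin j₀).mem_toFinset.mpr hl0
    have hPne : (∏ p ∈ S, (p:ℝ) ^ (k p)) ≠ 0 :=
      Finset.prod_ne_zero_iff.mpr fun p hp => zpow_ne_zero _ (hSne p hp)
    set c : ℚ := q ^ n' / ∏ p ∈ S, (p:ℚ) ^ (k p) with hc
    have hcne : c ≠ 0 := div_ne_zero (zpow_ne_zero _ hqne)
      (Finset.prod_ne_zero_iff.mpr fun p hp => zpow_ne_zero _
        (by exact_mod_cast (hSprime p hp).pos.ne'))
    have hcR : (c:ℝ) = (q:ℝ) ^ n' / ∏ p ∈ S, (p:ℝ) ^ (k p) := by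
      rw [hc]; push_cast; ring
    have hrel : ∏ j : Fin r, ∏ m ∈ T j, ((m:ℝ) + α j) ^ (l j m) = (c:ℝ) := by
      rw [hcR, eq_div_iff hPne, mul_comm, hprod]
    set A : MvPolynomial (Fin r) ℚ :=
      ∏ j : Fin r, ∏ m ∈ T j, (MvPolynomial.X j + MvPolynomial.C (m:ℚ)) ^ (l j m).toNat with hA
    set B : MvPolynomial (Fin r) ℚ :=
      ∏ j : Fin r, ∏ m ∈ T j, (MvPolynomial.X j + MvPolynomial.C (m:ℚ)) ^ (-(l j m)).toNat with hB
    have haA : MvPolynomial.aeval α A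
        = ∏ j : Fin r, ∏ m ∈ T j, ((m:ℝ) + α j) ^ (l j m).toNat := by
      rw [hA, map_prod]
      refine Finset.prod_congr rfl fun j _ => ?_
      rw [map_prod]
      refine Finset.prod_congr rfl fun m _ => ?_
      rw [map_pow, map_add, MvPolynomial.aeval_X, MvPolynomial.aeval_C]
      norm_num [add_comm]
    have haB : MvPolynomial.aeval α B
        = ∏ j : Fin r, ∏ m ∈ T j, ((m:ℝ) + α j) ^ (-(l j m)).toNat := by
      rw [hB, map_prod]
      refine Finset.prod_congr rfl fun j _ => ?_
      rw [map_prod]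
      refine Finset.prod_congr rfl fun m _ => ?_
      rw [map_pow, map_add, MvPolynomial.aeval_X, MvPolynomial.aeval_C]
      norm_num [add_comm]
    have hkey : (∏ j : Fin r, ∏ m ∈ T j, ((m:ℝ) + α j) ^ (l j m).toNat)
        = (c:ℝ) * ∏ j : Fin r, ∏ m ∈ T j, ((m:ℝ) + α j) ^ (-(l j m)).toNat := by
      have e1 : (∏ j : Fin r, ∏ m ∈ T j, ((m:ℝ) + α j) ^ (l j m).toNat)
          = ∏ j : Fin r, ∏ m ∈ T j,
            (((m:ℝ) + α j) ^ (l j m) * ((m:ℝ) + α j) ^ (-(l j m)).toNat) :=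
        Finset.prod_congr rfl fun j _ => Finset.prod_congr rfl fun m _ =>
          pow_toNat_eq (hαpos j m).ne' (l j m)
      rw [e1]
      simp only [Finset.prod_mul_distrib]
      rw [hrel]
    have hPz : MvPolynomial.aeval α (A - MvPolynomial.C c * B) = 0 := by
      rw [map_sub, map_mul, MvPolynomial.aeval_C, haA, haB, hkey]
      have : (algebraMap ℚ ℝ) c = (c : ℝ) := by norm_num
      rw [this, sub_self]
    have hP0 : A - MvPolynomial.C c * B = 0 := hind (hPz.trans (map_zero _).symm)
    -- evaluate at a point to get a contradiction
    set pt : Fin r → ℚ := fun j => if j = j₀ then -(m₀:ℚ) else 1 with hpt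
    have hbne : ∀ (j : Fin r) (m : ℕ), ¬(j = j₀ ∧ m = m₀) → pt j + (m:ℚ) ≠ 0 := by
      intro j m hne
      by_cases hj : j = j₀
      · subst hj
        intro h0
        simp only [hpt, if_pos rfl, ite_true, eq_self_iff_true] at h0
        have hmm : (m:ℚ) = (m₀:ℚ) := by linarith
        exact hne ⟨rfl, by exact_mod_cast hmm⟩
      · rw [hpt]; simp only [if_neg hj]
        positivity
    have hpt0 : pt j₀ + (m₀:ℚ) = 0 := by rw [hpt]; simp
    have heA : MvPolynomial.eval pt A = ∏ j : Fin r, ∏ m ∈ T j, (pt j + (m:ℚ)) ^ (l j m).toNat := by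
      rw [hA, map_prod]
      refine Finset.prod_congr rfl fun j _ => ?_
      rw [map_prod]
      exact Finset.prod_congr rfl fun m _ => by
        rw [map_pow, map_add, MvPolynomial.eval_X, MvPolynomial.eval_C]
    have heB : MvPolynomial.eval pt B
        = ∏ j : Fin r, ∏ m ∈ T j, (pt j + (m:ℚ)) ^ (-(l j m)).toNat := by
      rw [hB, map_prod]
      refine Finset.prod_congr rfl fun j _ => ?_
      rw [map_prod]
      exact Finset.prod_congr rfl fun m _ => by
        rw [map_pow, map_add, MvPolynomial.eval_X, MvPolynomial.eval_C]
    have heval := congrArg (MvPolynomial.eval pt) hP0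
    rw [map_zero, map_sub, map_mul, MvPolynomial.eval_C, heA, heB] at heval
    rcases hl0.lt_or_gt with hneg | hpos
    · -- l j₀ m₀ < 0 : eval B = 0, eval A ≠ 0
      have hB0 : (∏ j : Fin r, ∏ m ∈ T j, (pt j + (m:ℚ)) ^ (-(l j m)).toNat) = 0 := by
        apply Finset.prod_eq_zero (Finset.mem_univ j₀)
        apply Finset.prod_eq_zero hm₀T
        rw [hpt0]
        exact zero_pow (by omega)
      have hA0 : (∏ j : Fin r, ∏ m ∈ T j, (pt j + (m:ℚ)) ^ (l j m).toNat) ≠ 0 := by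
        rw [Finset.prod_ne_zero_iff]
        intro j _
        rw [Finset.prod_ne_zero_iff]
        intro m _
        by_cases hjm : j = j₀ ∧ m = m₀
        · obtain ⟨rfl, rfl⟩ := hjm
          rw [(by omega : (l j m).toNat = 0), pow_zero]
          exact one_ne_zero
        · exact pow_ne_zero _ (hbne j m hjm)
      rw [hB0, mul_zero, sub_zero] at heval
      exact hA0 heval
    · -- l j₀ m₀ > 0 : eval A = 0, eval B ≠ 0
      have hA0 : (∏ j : Fin r, ∏ m ∈ T j, (pt j + (m:ℚ)) ^ (l j m).toNat) = 0 := by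
        apply Finset.prod_eq_zero (Finset.mem_univ j₀)
        apply Finset.prod_eq_zero hm₀T
        rw [hpt0]
        exact zero_pow (by omega)
      have hB0 : (∏ j : Fin r, ∏ m ∈ T j, (pt j + (m:ℚ)) ^ (-(l j m)).toNat) ≠ 0 := by
        rw [Finset.prod_ne_zero_iff]
        intro j _
        rw [Finset.prod_ne_zero_iff]
        intro m _
        by_cases hjm : j = j₀ ∧ m = m₀
        · obtain ⟨rfl, rfl⟩ := hjm
          rw [(by omega : (-(l j m)).toNat = 0), pow_zero]
          exact one_ne_zero
        · exact pow_ne_zero _ (hbne j m hjm)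
      rw [hA0, zero_sub, neg_eq_zero, mul_eq_zero] at heval
      rcases heval with hc0 | hb0
      · exact hcne hc0
      · exact hB0 hb0
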